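/- The vector β5 = e1+e2+e3+e4+e5+e6 is a magic labelling of G2 (with magic sum 2), it satisfies the identity β5 = β1 + β2 + β3 − β4 in ℤ^9, and β5 is not a nonnegative real linear combination of β1, β2, β3, β4. -/
import Mathlib

/-- Magic labelling of the graph G2 with magic sum `s`. -/
def MagicG2 (x : Fin 9 → ℕ) (s : ℕ) : Prop :=
  x 3 + x 5 + x 7 = s ∧ x 0 + x 1 + x 6 = s ∧ x 3 + x 4 + x 8 = s ∧
  x 1 + x 2 + x 7 = s ∧ x 4 + x 5 + x 6 = s ∧ x 0 + x 2 + x 8 = s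

def beta5N : Fin 9 → ℕ := ![1, 1, 1, 1, 1, 1, 0, 0, 0]

def beta1Z : Fin 9 → ℤ := ![1, 0, 0, 0, 1, 0, 0, 1, 0]
def beta2Z : Fin 9 → ℤ := ![0, 1, 0, 0, 0, 1, 0, 0, 1]
def beta3Z : Fin 9 → ℤ := ![0, 0, 1, 1, 0, 0, 1, 0, 0]
def beta4Z : Fin 9 → ℤ := ![0, 0, 0, 0, 0, 0, 1, 1, 1]
def beta5Z : Fin 9 → ℤ := ![1, 1, 1, 1, 1, 1, 0, 0, 0]

def beta1R : Fin 9 → ℝ := ![1, 0, 0, 0, 1, 0, 0, 1, 0]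
def beta2R : Fin 9 → ℝ := ![0, 1, 0, 0, 0, 1, 0, 0, 1]
def beta3R : Fin 9 → ℝ := ![0, 0, 1, 1, 0, 0, 1, 0, 0]
def beta4R : Fin 9 → ℝ := ![0, 0, 0, 0, 0, 0, 1, 1, 1]
def beta5R : Fin 9 → ℝ := ![1, 1, 1, 1, 1, 1, 0, 0, 0]

theorem stmt_4 :
    MagicG2 beta5N 2 ∧
    beta5Z = beta1Z + beta2Z + beta3Z - beta4Z ∧
    ¬ ∃ c : Fin 4 → ℝ, (∀ i, 0 ≤ c i) ∧
        beta5R = c 0 • beta1R + c 1 • beta2R + c 2 • beta3R + c 3 • beta4R := by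
  refine ⟨⟨rfl, rfl, rfl, rfl, rfl, rfl⟩, ?_, ?_⟩
  · funext i; fin_cases i <;> rfl
  · rintro ⟨c, hc, h⟩
    have h6 := congrFun h 6
    have h3 := congrFun h 3
    simp only [Pi.add_apply, Pi.smul_apply, smul_eq_mul,
      show beta5R 6 = 0 from rfl, show beta1R 6 = 0 from rfl,
      show beta2R 6 = 0 from rfl, show beta3R 6 = 1 from rfl,
      show beta4R 6 = 1 from rfl] at h6
    simp only [Pi.add_apply, Pi.smul_apply, smul_eq_mul,
      show beta5R 3 = 1 from rfl, show beta1R 3 = 0 from rfl,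
      show beta2R 3 = 0 from rfl, show beta3R 3 = 1 from rfl,
      show beta4R 3 = 0 from rfl] at h3
    have h2 := hc 2
    have h4 := hc 3
    nlinarith [hc 2, hc 3]
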